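/- arXiv:1107.5862 — 3 statements merged into one kernel-verified Lean document; each statement's English description precedes it below -/
import Mathlib

section
/- Let N ≥ 3 be an integer and let i, j, k be three pairwise distinct indices in {1,…,N}. If v ∈ ℝ^N satisfies b_N(v, α_i) = 0, b_N(v, α_j) = 0, b_N(v, α_k) = 0 and b_N(v, v) = 0, then v = 0. (The faces of codimension ≥ 3 of the cone D_N do not meet the isotropic cone of b_N outside the origin.) -/
open Matrix

/-- The matrix `M_{N,j}`: identity except in the `j`-th column, whose `j`-th entry
is `-1` and whose other entries are all `2`. -/
noncomputable def Mmat (N : ℕ) (j : Fin N) : Matrix (Fin N) (Fin N) ℝ :=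
  Matrix.of fun i k => if k = j then (if i = j then -1 else 2) else (if i = k then 1 else 0)

/-- The matrix `B_N`: diagonal entries `-1`, off-diagonal entries `1`. -/
noncomputable def Bmat (N : ℕ) : Matrix (Fin N) (Fin N) ℝ :=
  Matrix.of fun i k => if i = k then -1 else 1

/-- The symmetric bilinear form `b_N(v,w) = vᵗ B_N w` on `ℝ^N`. -/
noncomputable def bform (N : ℕ) (v w : Fin N → ℝ) : ℝ := v ⬝ᵥ (Bmat N).mulVec w

/-- The subgroup of `GL_N(ℝ)` generated by the transposed matrices `M_{N,j}ᵗ`. -/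
noncomputable def Ggrp (N : ℕ) : Subgroup (GL (Fin N) ℝ) :=
  Subgroup.closure {g | ∃ j : Fin N, (g : Matrix (Fin N) (Fin N) ℝ) = (Mmat N j)ᵀ}

/-- The fundamental cone `D_N = {w : b_N(w, α_i) ≥ 0 for all i}`. -/
def Dcone (N : ℕ) : Set (Fin N → ℝ) := {w | ∀ i : Fin N, 0 ≤ bform N w (Pi.single i 1)}

/-- The Tits cone `T_N = ⋃_{g ∈ G_N} g (D_N)`. -/
def Tcone (N : ℕ) : Set (Fin N → ℝ) :=
  {v | ∃ g ∈ Ggrp N, ∃ w ∈ Dcone N, v = (g : Matrix (Fin N) (Fin N) ℝ).mulVec w}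

/-- The vector `c_j = u_N - (N-2) α_j`: coordinates `1` except the `j`-th which is `-(N-3)`. -/
noncomputable def cvec (N : ℕ) (j : Fin N) : Fin N → ℝ :=
  fun i => if i = j then -((N : ℝ) - 3) else 1

/-- The integral matrix `M_{N,j}`. -/
def MmatZ (N : ℕ) (j : Fin N) : Matrix (Fin N) (Fin N) ℤ :=
  Matrix.of fun i k => if k = j then (if i = j then -1 else 2) else (if i = k then 1 else 0)

/-- The integral matrix `B_N`. -/
def BmatZ (N : ℕ) : Matrix (Fin N) (Fin N) ℤ :=
  Matrix.of fun i k => if i = k then -1 else 1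

/-- The bilinear form `b_N` on `ℤ^N`. -/
def bformZ (N : ℕ) (v w : Fin N → ℤ) : ℤ := v ⬝ᵥ (BmatZ N).mulVec w

lemma Bmat_mulVec (N : ℕ) (v : Fin N → ℝ) (l : Fin N) :
    (Bmat N).mulVec v l = (∑ x, v x) - 2 * v l := by
  unfold Bmat
  simp only [mulVec, dotProduct, Matrix.of_apply]
  have h : ∀ x : Fin N, (if l = x then (-1:ℝ) else 1) * v x
      = v x - (if x = l then 2 * v x else 0) := by
    intro x
    by_cases hx : x = l
    · simp [hx]; ring
    · have hlx : l ≠ x := fun h => hx h.symm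
      simp [hx, hlx]
  rw [Finset.sum_congr rfl (fun x _ => h x), Finset.sum_sub_distrib,
    Finset.sum_ite_eq' Finset.univ l (fun x => 2 * v x)]
  simp

lemma bform_single (N : ℕ) (v : Fin N → ℝ) (i : Fin N) :
    bform N v (Pi.single i 1) = (∑ l, v l) - 2 * v i := by
  unfold bform
  simp only [dotProduct, Bmat_mulVec]
  have h : ∀ l : Fin N, v l * ((∑ x, Pi.single i (1:ℝ) x) - 2 * (Pi.single i 1 : Fin N → ℝ) l)
      = v l - (if l = i then 2 * v l else 0) := by
    intro l
    rw [Finset.sum_pi_single']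
    by_cases hl : l = i <;> simp [hl, Pi.single_apply] <;> ring
  rw [Finset.sum_congr rfl (fun l _ => h l), Finset.sum_sub_distrib,
    Finset.sum_ite_eq' Finset.univ i (fun l => 2 * v l)]
  simp

lemma bform_self (N : ℕ) (v : Fin N → ℝ) :
    bform N v v = (∑ l, v l) ^ 2 - 2 * ∑ l, v l ^ 2 := by
  unfold bform
  simp only [dotProduct, Bmat_mulVec]
  have h : ∀ l : Fin N, v l * ((∑ x, v x) - 2 * v l)
      = v l * (∑ x, v x) - 2 * v l ^ 2 := by intro l; ring
  rw [Finset.sum_congr rfl (fun l _ => h l), Finset.sum_sub_distrib,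
    ← Finset.sum_mul, ← Finset.mul_sum]
  ring

/-- A `b_N`-isotropic vector orthogonal to three pairwise distinct basis vectors
`α_i, α_j, α_k` is zero. -/
theorem stmt7 (N : ℕ) (hN : 3 ≤ N) (i j k : Fin N)
    (hij : i ≠ j) (hik : i ≠ k) (hjk : j ≠ k) (v : Fin N → ℝ)
    (h1 : bform N v (Pi.single i 1) = 0) (h2 : bform N v (Pi.single j 1) = 0)
    (h3 : bform N v (Pi.single k 1) = 0) (h4 : bform N v v = 0) :
    v = 0 := by
  rw [bform_single] at h1 h2 h3
  rw [bform_self] at h4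
  set S := ∑ l, v l with hS
  have hsub : ({i, j, k} : Finset (Fin N)) ⊆ Finset.univ := Finset.subset_univ _
  have hsum3 : ∑ l ∈ ({i, j, k} : Finset (Fin N)), v l ^ 2 ≤ ∑ l, v l ^ 2 :=
    Finset.sum_le_sum_of_subset_of_nonneg hsub (fun l _ _ => sq_nonneg _)
  have heq : ∑ l ∈ ({i, j, k} : Finset (Fin N)), v l ^ 2 = v i ^ 2 + v j ^ 2 + v k ^ 2 := by
    rw [Finset.sum_insert (by simp [hij, hik]), Finset.sum_insert (by simp [hjk]),
      Finset.sum_singleton]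
    ring
  rw [heq] at hsum3
  have hvi : v i = S / 2 := by linarith
  have hvj : v j = S / 2 := by linarith
  have hvk : v k = S / 2 := by linarith
  rw [hvi, hvj, hvk] at hsum3
  have hsq : ∑ l, v l ^ 2 = 0 := by nlinarith [sq_nonneg S]
  have := (Finset.sum_eq_zero_iff_of_nonneg (fun l _ => sq_nonneg (v l))).mp hsq
  funext l
  have hl := this l (Finset.mem_univ l)
  have := pow_eq_zero_iff (n := 2) (by norm_num) |>.mp hl
  simpa using this
end

section
/- Let N ≥ 3 be an integer and let a ∈ ℤ^N satisfy b_N(a,a) = 0. Then there exists a matrix g in the subgroup of GL_N(ℝ) generated by the transposed matrices M_{N,j}ᵗ (1 ≤ j ≤ N) such that the vector g·a has at least one coordinate ≤ 0. -/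
open Matrix

lemma Mmat_mul_self (N : ℕ) (j : Fin N) : Mmat N j * Mmat N j = 1 := by
  ext i k
  rw [Matrix.mul_apply]
  by_cases hi : i = j <;> by_cases hk : k = j
  · have h1 : ∀ l, Mmat N j i l * Mmat N j l k = if l = j then 1 else 0 := by
      intro l; simp only [Mmat, Matrix.of_apply]; split_ifs <;> simp_all
    rw [Finset.sum_congr rfl fun l _ => h1 l]
    simp [Matrix.one_apply, hi, hk]
  · have h1 : ∀ l, Mmat N j i l * Mmat N j l k = 0 := by
      intro l; simp only [Mmat, Matrix.of_apply]; split_ifs <;> simp_all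
    rw [Finset.sum_congr rfl fun l _ => h1 l]
    have : i ≠ k := by rintro rfl; exact hk hi
    simp [Matrix.one_apply, this]
  · have h1 : ∀ l, Mmat N j i l * Mmat N j l k =
        (if l = j then -2 else 0) + (if l = i then 2 else 0) := by
      intro l; simp only [Mmat, Matrix.of_apply]
      by_cases h : l = j <;> by_cases h' : l = i <;> simp [h, h', hi, hk, Ne.symm] <;>
        simp_all
    rw [Finset.sum_congr rfl fun l _ => h1 l]
    have : i ≠ k := by rintro rfl; exact hi hk
    simp [Finset.sum_add_distrib, Matrix.one_apply, this]
  · have h1 : ∀ l, Mmat N j i l * Mmat N j l k =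
        if l = k then (if i = k then 1 else 0) else 0 := by
      intro l; simp only [Mmat, Matrix.of_apply]; split_ifs <;> simp_all
    rw [Finset.sum_congr rfl fun l _ => h1 l]
    simp [Matrix.one_apply]

lemma mulVec_MT (N : ℕ) (j : Fin N) (v : Fin N → ℝ) :
    (Mmat N j)ᵀ.mulVec v = fun i => if i = j then 2 * (∑ k, v k) - 3 * v j else v i := by
  funext i
  rw [Matrix.mulVec, dotProduct]
  by_cases hi : i = j
  · subst hi
    have h1 : ∀ l, (Mmat N i)ᵀ i l * v l = 2 * v l - (if l = i then 3 * v l else 0) := by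
      intro l; simp only [Mmat, Matrix.transpose_apply, Matrix.of_apply]
      split_ifs <;> simp_all <;> ring
    rw [Finset.sum_congr rfl fun l _ => h1 l]
    simp [Finset.sum_sub_distrib, Finset.mul_sum]
  · have h1 : ∀ l, (Mmat N j)ᵀ i l * v l = if l = i then v l else 0 := by
      intro l; simp only [Mmat, Matrix.transpose_apply, Matrix.of_apply]
      split_ifs <;> simp_all
    rw [Finset.sum_congr rfl fun l _ => h1 l]
    simp [hi]

noncomputable def MTunit (N : ℕ) (j : Fin N) : GL (Fin N) ℝ :=
  ⟨(Mmat N j)ᵀ, (Mmat N j)ᵀ,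
    by rw [← Matrix.transpose_mul, Mmat_mul_self, Matrix.transpose_one],
    by rw [← Matrix.transpose_mul, Mmat_mul_self, Matrix.transpose_one]⟩

lemma MTunit_mem (N : ℕ) (j : Fin N) : MTunit N j ∈ Ggrp N :=
  Subgroup.subset_closure ⟨j, rfl⟩

lemma bformZ_self (N : ℕ) (v : Fin N → ℤ) :
    bformZ N v v = (∑ i, v i) ^ 2 - 2 * ∑ i, (v i) ^ 2 := by
  unfold bformZ BmatZ
  rw [dotProduct]
  have h1 : ∀ i, v i * ((Matrix.of fun i k => if i = k then (-1 : ℤ) else 1).mulVec v) i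
      = v i * (∑ k, v k) - 2 * (v i) ^ 2 := by
    intro i
    rw [Matrix.mulVec, dotProduct]
    have h2 : ∀ k, (Matrix.of fun i k => if i = k then (-1 : ℤ) else 1) i k * v k
        = v k - (if i = k then 2 * v k else 0) := by
      intro k; simp only [Matrix.of_apply]
      by_cases h : i = k <;> simp [h] <;> ring
    rw [Finset.sum_congr rfl fun k _ => h2 k, Finset.sum_sub_distrib]
    simp; ring
  rw [Finset.sum_congr rfl fun i _ => h1 i, Finset.sum_sub_distrib, ← Finset.sum_mul,
    ← Finset.mul_sum]
  ring

lemma sum_upd (N : ℕ) (a : Fin N → ℤ) (j : Fin N) (t : ℤ) :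
    ∑ i, (if i = j then t else a i) = (∑ i, a i) + (t - a j) := by
  have h : ∀ i, (if i = j then t else a i) = a i + (if i = j then t - a j else 0) := by
    intro i; by_cases h : i = j <;> simp [h]
  rw [Finset.sum_congr rfl fun i _ => h i, Finset.sum_add_distrib]
  simp

lemma sum_sq_upd (N : ℕ) (a : Fin N → ℤ) (j : Fin N) (t : ℤ) :
    ∑ i, (if i = j then t else a i) ^ 2 = (∑ i, (a i) ^ 2) + (t ^ 2 - (a j) ^ 2) := by
  have h : ∀ i, (if i = j then t else a i) ^ 2
      = (a i) ^ 2 + (if i = j then t ^ 2 - (a j) ^ 2 else 0) := by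
    intro i; by_cases h : i = j <;> simp [h]
  rw [Finset.sum_congr rfl fun i _ => h i, Finset.sum_add_distrib]
  simp

lemma descent (N : ℕ) (hN : 3 ≤ N) (a : Fin N → ℤ) (hpos : ∀ i, 1 ≤ a i) (j : Fin N)
    (hj : ∀ i, a i ≤ a j) (hiso : (∑ i, a i) ^ 2 = 2 * ∑ i, (a i) ^ 2) :
    ∑ i, a i < 2 * a j := by
  set S := ∑ i, a i with hS
  set Q := ∑ i, (a i) ^ 2 with hQ
  have hQle : Q ≤ a j * S := by
    rw [hQ, hS, Finset.mul_sum]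
    apply Finset.sum_le_sum
    intro i _
    have := hj i; have := hpos i; nlinarith
  have hSpos : 0 < S := by
    rw [hS]
    have : (0:ℤ) < ∑ i : Fin N, 1 := by simp; omega
    calc (0:ℤ) < ∑ i : Fin N, 1 := this
      _ ≤ ∑ i, a i := Finset.sum_le_sum fun i _ => hpos i
  have hle : S ≤ 2 * a j := by nlinarith
  rcases lt_or_eq_of_le hle with h | h
  · exact h
  · exfalso
    have hQeq : Q = a j * S := by nlinarith
    have hall : ∀ i, a i = a j := by
      have hz : ∑ i, (a j * a i - (a i) ^ 2) = 0 := by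
        rw [Finset.sum_sub_distrib, ← Finset.mul_sum, ← hS, ← hQ]; omega
      have hnn : ∀ i ∈ Finset.univ, (0:ℤ) ≤ a j * a i - (a i) ^ 2 := by
        intro i _; have := hj i; have := hpos i; nlinarith
      intro i
      have := (Finset.sum_eq_zero_iff_of_nonneg hnn).mp hz i (Finset.mem_univ i)
      have h1 := hpos i; nlinarith
    have hSval : S = N * a j := by
      rw [hS, Finset.sum_congr rfl fun i _ => hall i]
      simp [mul_comm]
    have h1 := hpos j
    have hN3 : (3:ℤ) ≤ N := by exact_mod_cast hN
    nlinarith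

lemma aux_main (N : ℕ) (hN : 3 ≤ N) : ∀ n : ℕ, ∀ a : Fin N → ℤ, bformZ N a a = 0 →
    (∑ i, a i).toNat ≤ n → ∃ g ∈ Ggrp N, ∃ i : Fin N,
      ((g : Matrix (Fin N) (Fin N) ℝ).mulVec (fun k => (a k : ℝ))) i ≤ 0 := by
  intro n
  induction n with
  | zero =>
    intro a hiso hle
    by_cases hex : ∃ i, a i ≤ 0
    · obtain ⟨i, hi⟩ := hex
      refine ⟨1, Subgroup.one_mem _, i, ?_⟩
      simp only [Units.val_one, Matrix.one_mulVec]
      exact_mod_cast hi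
    · exfalso
      push_neg at hex
      have hpos : ∀ i, 1 ≤ a i := fun i => hex i
      have : (0:ℤ) < ∑ i, a i := by
        have h0 : (0:ℤ) < ∑ i : Fin N, 1 := by simp; omega
        calc (0:ℤ) < ∑ i : Fin N, 1 := h0
          _ ≤ ∑ i, a i := Finset.sum_le_sum fun i _ => hpos i
      omega
  | succ n ih =>
    intro a hiso hle
    by_cases hex : ∃ i, a i ≤ 0
    · obtain ⟨i, hi⟩ := hex
      refine ⟨1, Subgroup.one_mem _, i, ?_⟩
      simp only [Units.val_one, Matrix.one_mulVec]
      exact_mod_cast hi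
    · push_neg at hex
      have hpos : ∀ i, 1 ≤ a i := fun i => hex i
      haveI : Nonempty (Fin N) := ⟨⟨0, by omega⟩⟩
      obtain ⟨j, hj⟩ := Finite.exists_max a
      set S := ∑ i, a i with hS
      have hiso' : S ^ 2 = 2 * ∑ i, (a i) ^ 2 := by
        have h := bformZ_self N a
        rw [hiso, ← hS] at h
        linarith
      have hSpos : (0:ℤ) < S := by
        have h0 : (0:ℤ) < ∑ i : Fin N, 1 := by simp; omega
        calc (0:ℤ) < ∑ i : Fin N, 1 := h0
          _ ≤ ∑ i, a i := Finset.sum_le_sum fun i _ => hpos i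
      have hlt : S < 2 * a j := descent N hN a hpos j hj hiso'
      -- the new vector
      set a' : Fin N → ℤ := fun i => if i = j then 2 * S - 3 * a j else a i with ha'
      have hsum' : ∑ i, a' i = 3 * S - 4 * a j := by
        rw [ha', sum_upd, ← hS]; ring
      have hsq' : ∑ i, (a' i) ^ 2 = (∑ i, (a i) ^ 2) + ((2 * S - 3 * a j) ^ 2 - (a j) ^ 2) := by
        rw [ha', sum_sq_upd]
      have hiso2 : bformZ N a' a' = 0 := by
        rw [bformZ_self, hsum', hsq']
        nlinarith [hiso']
      have htoNat : (∑ i, a' i).toNat ≤ n := by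
        rw [hsum']; omega
      obtain ⟨g', hg', i, hgi⟩ := ih a' hiso2 htoNat
      refine ⟨g' * MTunit N j, mul_mem hg' (MTunit_mem N j), i, ?_⟩
      have hcast : (Mmat N j)ᵀ.mulVec (fun k => (a k : ℝ)) = fun k => (a' k : ℝ) := by
        rw [mulVec_MT]
        funext i'
        by_cases h : i' = j <;> simp [ha', h, hS] <;> push_cast <;> ring
      rw [Units.val_mul, ← Matrix.mulVec_mulVec,
        show ((MTunit N j : Matrix (Fin N) (Fin N) ℝ)) = (Mmat N j)ᵀ from rfl, hcast]
      exact hgi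

/-- Every integral `b_N`-isotropic vector can be moved by an element of `G_N`
to a vector with at least one non-positive coordinate. -/
theorem stmt10 (N : ℕ) (hN : 3 ≤ N) (a : Fin N → ℤ) (hiso : bformZ N a a = 0) :
    ∃ g ∈ Ggrp N, ∃ i : Fin N,
      ((g : Matrix (Fin N) (Fin N) ℝ).mulVec (fun k => (a k : ℝ))) i ≤ 0 := by
  exact aux_main N hN (∑ i, a i).toNat a hiso le_rfl
end

section
/- Let v ∈ ℤ³ be a nonzero integer vector with b_3(v,v) = 0. Then there exist g ∈ G_3, an index i ∈ {1,2,3} and a nonzero rational number λ such that g·v = λ·c_i, where c_1 = (0,1,1), c_2 = (1,0,1), c_3 = (1,1,0). (Every rational isotropic point can be mapped to one of the three vertices of the fundamental domain by the action of UC(3).) -/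
open Matrix

/- ---------- auxiliary material ---------- -/

lemma bexp (w : Fin 3 → ℤ) : bformZ 3 w w =
    2*w 0*w 1 + 2*w 0*w 2 + 2*w 1*w 2 - w 0^2 - w 1^2 - w 2^2 := by
  simp [bformZ, BmatZ, Matrix.mulVec, dotProduct, Fin.sum_univ_three]
  ring


lemma fin3_cases : ∀ j : Fin 3, j = 0 ∨ j = 1 ∨ j = 2 := by decide

lemma Msq (j : Fin 3) : (Mmat 3 j)ᵀ * (Mmat 3 j)ᵀ = 1 := by
  fin_cases j <;> · ext i k; fin_cases i <;> fin_cases k <;>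
    simp [Mmat, Matrix.mul_apply, Fin.sum_univ_three, Matrix.one_apply]

/-- `M_{3,j}ᵀ` as an element of `GL_3(ℝ)`. -/
noncomputable def Mg (j : Fin 3) : GL (Fin 3) ℝ :=
  ⟨(Mmat 3 j)ᵀ, (Mmat 3 j)ᵀ, Msq j, Msq j⟩

lemma Mg_mem (j : Fin 3) : Mg j ∈ Ggrp 3 :=
  Subgroup.subset_closure ⟨j, rfl⟩

def reflZ (j : Fin 3) (v : Fin 3 → ℤ) : Fin 3 → ℤ :=
  fun i => if i = j then 2*(v 0 + v 1 + v 2) - 3 * v j else v i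

set_option linter.unusedTactic false in
lemma mulVec_refl (j : Fin 3) (v : Fin 3 → ℤ) :
    ((Mmat 3 j)ᵀ).mulVec (fun k => (v k : ℝ)) = fun k => ((reflZ j v k : ℤ) : ℝ) := by
  funext i
  fin_cases j <;> fin_cases i <;>
    simp [Mmat, reflZ, Matrix.mulVec, dotProduct, Fin.sum_univ_three] <;>
    (push_cast; ring)

lemma arith (a b c : ℤ) (ha : 0 < a) (hb : 0 < b) (hca : a ≤ c) (hcb : b ≤ c)
    (hQ : (a + b - c)^2 = 4*a*b) : 0 ≤ 2*(a+b) - c ∧ 2*(a+b) - c < c := by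
  have key : c * (2*(a+b) - c) = (a-b)^2 := by linear_combination -hQ
  constructor
  · nlinarith [sq_nonneg (a-b)]
  · by_contra h
    push_neg at h
    have h1 : c ≤ a + b := by linarith
    nlinarith [mul_nonneg (sub_nonneg.2 h1) (sub_nonneg.2 hcb),
      mul_nonneg (sub_nonneg.2 h1) (sub_nonneg.2 hca), mul_pos ha hb]

lemma stepAt (v : Fin 3 → ℤ) (hpos : ∀ i, 0 < v i) (hQ : bformZ 3 v v = 0)
    (j : Fin 3) (hmax : ∀ i, v i ≤ v j) :
    (∀ i, 0 ≤ reflZ j v i) ∧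
    reflZ j v 0 + reflZ j v 1 + reflZ j v 2 < v 0 + v 1 + v 2 ∧
    bformZ 3 (reflZ j v) (reflZ j v) = 0 ∧ reflZ j v ≠ 0 := by
  have hQ' := hQ; rw [bexp] at hQ'
  rcases fin3_cases j with rfl | rfl | rfl
  · -- j = 0
    have hsq : (v 1 + v 2 - v 0)^2 = 4 * v 1 * v 2 := by linear_combination -hQ'
    obtain ⟨hge, hlt⟩ := arith (v 1) (v 2) (v 0) (hpos 1) (hpos 2) (hmax 1) (hmax 2) hsq
    have e0 : reflZ 0 v 0 = 2*(v 1 + v 2) - v 0 := by simp [reflZ]; ring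
    have e1 : reflZ 0 v 1 = v 1 := by simp [reflZ]
    have e2 : reflZ 0 v 2 = v 2 := by simp [reflZ]
    refine ⟨?_, ?_, ?_, ?_⟩
    · intro i
      rcases fin3_cases i with rfl | rfl | rfl
      · rw [e0]; exact hge
      · rw [e1]; exact (hpos 1).le
      · rw [e2]; exact (hpos 2).le
    · rw [e0, e1, e2]; linarith
    · rw [bexp, e0, e1, e2]; linear_combination hQ'
    · intro h
      have := congrFun h 1
      rw [e1] at this
      exact absurd this (hpos 1).ne'
  · -- j = 1
    have hsq : (v 0 + v 2 - v 1)^2 = 4 * v 0 * v 2 := by linear_combination -hQ'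
    obtain ⟨hge, hlt⟩ := arith (v 0) (v 2) (v 1) (hpos 0) (hpos 2) (hmax 0) (hmax 2) hsq
    have e0 : reflZ 1 v 0 = v 0 := by simp [reflZ]
    have e1 : reflZ 1 v 1 = 2*(v 0 + v 2) - v 1 := by simp [reflZ]; ring
    have e2 : reflZ 1 v 2 = v 2 := by simp [reflZ]
    refine ⟨?_, ?_, ?_, ?_⟩
    · intro i
      rcases fin3_cases i with rfl | rfl | rfl
      · rw [e0]; exact (hpos 0).le
      · rw [e1]; exact hge
      · rw [e2]; exact (hpos 2).le
    · rw [e0, e1, e2]; linarith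
    · rw [bexp, e0, e1, e2]; linear_combination hQ'
    · intro h
      have := congrFun h 0
      rw [e0] at this
      exact absurd this (hpos 0).ne'
  · -- j = 2
    have hsq : (v 0 + v 1 - v 2)^2 = 4 * v 0 * v 1 := by linear_combination -hQ'
    obtain ⟨hge, hlt⟩ := arith (v 0) (v 1) (v 2) (hpos 0) (hpos 1) (hmax 0) (hmax 1) hsq
    have e0 : reflZ 2 v 0 = v 0 := by simp [reflZ]
    have e1 : reflZ 2 v 1 = v 1 := by simp [reflZ]
    have e2 : reflZ 2 v 2 = 2*(v 0 + v 1) - v 2 := by simp [reflZ]; ring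
    refine ⟨?_, ?_, ?_, ?_⟩
    · intro i
      rcases fin3_cases i with rfl | rfl | rfl
      · rw [e0]; exact (hpos 0).le
      · rw [e1]; exact (hpos 1).le
      · rw [e2]; exact hge
    · rw [e0, e1, e2]; linarith
    · rw [bexp, e0, e1, e2]; linear_combination hQ'
    · intro h
      have := congrFun h 0
      rw [e0] at this
      exact absurd this (hpos 0).ne'

lemma key_ind : ∀ n : ℕ, ∀ v : Fin 3 → ℤ, (∀ i, 0 ≤ v i) → v ≠ 0 → bformZ 3 v v = 0 →
    v 0 + v 1 + v 2 ≤ (n : ℤ) →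
    ∃ g ∈ Ggrp 3, ∃ i : Fin 3, ∃ lam : ℚ, lam ≠ 0 ∧
      (g : Matrix (Fin 3) (Fin 3) ℝ).mulVec (fun k => (v k : ℝ)) =
        (lam : ℝ) • (![![0, 1, 1], ![1, 0, 1], ![1, 1, 0]] : Fin 3 → Fin 3 → ℝ) i := by
  intro n
  induction n with
  | zero =>
    intro v hnn hv hQ hsum
    exfalso
    apply hv
    funext i
    have h0 := hnn 0; have h1 := hnn 1; have h2 := hnn 2
    rcases fin3_cases i with rfl | rfl | rfl <;> simp only [Pi.zero_apply] <;> omega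
  | succ n ih =>
    intro v hnn hv hQ hsum
    by_cases hz : ∃ j : Fin 3, v j = 0
    · -- base case: some coordinate is zero
      obtain ⟨j, hj⟩ := hz
      have hQ' := hQ; rw [bexp] at hQ'
      rcases fin3_cases j with rfl | rfl | rfl
      · have h12 : v 1 = v 2 := by
          have h : (v 1 - v 2)^2 = 0 := by
            linear_combination -hQ' + (2*v 1 + 2*v 2 - v 0) * hj
          have := pow_eq_zero_iff (n := 2) (by norm_num) |>.mp h
          linarith
        have ht : v 1 ≠ 0 := by
          intro h10
          apply hv; funext i
          rcases fin3_cases i with rfl | rfl | rfl <;> simp only [Pi.zero_apply] <;> omega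
        refine ⟨1, one_mem _, 0, (v 1 : ℚ), by exact_mod_cast ht, ?_⟩
        funext k
        rcases fin3_cases k with rfl | rfl | rfl <;>
          simp [Units.val_one, Matrix.one_mulVec, hj, h12]
      · have h12 : v 0 = v 2 := by
          have h : (v 0 - v 2)^2 = 0 := by
            linear_combination -hQ' + (2*v 0 + 2*v 2 - v 1) * hj
          have := pow_eq_zero_iff (n := 2) (by norm_num) |>.mp h
          linarith
        have ht : v 0 ≠ 0 := by
          intro h10
          apply hv; funext i
          rcases fin3_cases i with rfl | rfl | rfl <;> simp only [Pi.zero_apply] <;> omega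
        refine ⟨1, one_mem _, 1, (v 0 : ℚ), by exact_mod_cast ht, ?_⟩
        funext k
        rcases fin3_cases k with rfl | rfl | rfl <;>
          simp [Units.val_one, Matrix.one_mulVec, hj, h12]
      · have h12 : v 0 = v 1 := by
          have h : (v 0 - v 1)^2 = 0 := by
            linear_combination -hQ' + (2*v 0 + 2*v 1 - v 2) * hj
          have := pow_eq_zero_iff (n := 2) (by norm_num) |>.mp h
          linarith
        have ht : v 0 ≠ 0 := by
          intro h10
          apply hv; funext i
          rcases fin3_cases i with rfl | rfl | rfl <;> simp only [Pi.zero_apply] <;> omega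
        refine ⟨1, one_mem _, 2, (v 0 : ℚ), by exact_mod_cast ht, ?_⟩
        funext k
        rcases fin3_cases k with rfl | rfl | rfl <;>
          simp [Units.val_one, Matrix.one_mulVec, hj, h12]
    · -- descent step: all coordinates positive
      push_neg at hz
      have hpos : ∀ i, 0 < v i := fun i => lt_of_le_of_ne (hnn i) (Ne.symm (hz i))
      obtain ⟨j, -, hmax⟩ := Finset.exists_max_image Finset.univ v ⟨0, Finset.mem_univ 0⟩
      have hmax' : ∀ i, v i ≤ v j := fun i => hmax i (Finset.mem_univ i)
      obtain ⟨hnn', hlt, hQ'', hne⟩ := stepAt v hpos hQ j hmax'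
      have hsum' : reflZ j v 0 + reflZ j v 1 + reflZ j v 2 ≤ (n : ℤ) := by
        push_cast at hsum ⊢; omega
      obtain ⟨g, hg, i, lam, hlam, heq⟩ := ih (reflZ j v) hnn' hne hQ'' hsum'
      refine ⟨g * Mg j, mul_mem hg (Mg_mem j), i, lam, hlam, ?_⟩
      have hstep : ((g * Mg j : GL (Fin 3) ℝ) : Matrix (Fin 3) (Fin 3) ℝ).mulVec
          (fun k => (v k : ℝ)) =
          (g : Matrix (Fin 3) (Fin 3) ℝ).mulVec (fun k => ((reflZ j v k : ℤ) : ℝ)) := by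
        rw [Units.val_mul, ← Matrix.mulVec_mulVec,
          show ((Mg j : GL (Fin 3) ℝ) : Matrix (Fin 3) (Fin 3) ℝ) = (Mmat 3 j)ᵀ from rfl,
          mulVec_refl j v]
      rw [hstep, heq]

/-- Every nonzero integral `b_3`-isotropic vector can be mapped by an element of `G_3`
to a nonzero rational multiple of one of `c_1 = (0,1,1)`, `c_2 = (1,0,1)`,
`c_3 = (1,1,0)`. -/
theorem stmt13 (v : Fin 3 → ℤ) (hv : v ≠ 0) (hiso : bformZ 3 v v = 0) :
    ∃ g ∈ Ggrp 3, ∃ i : Fin 3, ∃ lam : ℚ, lam ≠ 0 ∧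
      (g : Matrix (Fin 3) (Fin 3) ℝ).mulVec (fun k => (v k : ℝ)) =
        (lam : ℝ) • (![![0, 1, 1], ![1, 0, 1], ![1, 1, 0]] : Fin 3 → Fin 3 → ℝ) i := by
  have hQ' := hiso; rw [bexp] at hQ'
  have p01 : 0 ≤ v 0 * v 1 := by nlinarith [sq_nonneg (v 0 + v 1 - v 2)]
  have p02 : 0 ≤ v 0 * v 2 := by nlinarith [sq_nonneg (v 0 + v 2 - v 1)]
  have p12 : 0 ≤ v 1 * v 2 := by nlinarith [sq_nonneg (v 1 + v 2 - v 0)]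
  by_cases hsgn : ∀ i, 0 ≤ v i
  · exact key_ind (v 0 + v 1 + v 2).toNat v hsgn hv hiso (Int.self_le_toNat _)
  · push_neg at hsgn
    obtain ⟨j, hj⟩ := hsgn
    have hneg : ∀ i, v i ≤ 0 := by
      intro i
      by_contra h
      push_neg at h
      rcases fin3_cases i with rfl | rfl | rfl <;> rcases fin3_cases j with rfl | rfl | rfl <;>
        nlinarith
    set w : Fin 3 → ℤ := -v with hw
    have hwnn : ∀ i, 0 ≤ w i := fun i => by simpa [hw] using hneg i
    have hwne : w ≠ 0 := by
      intro h; apply hv; have := congrArg Neg.neg h; simpa [hw] using this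
    have hwQ : bformZ 3 w w = 0 := by
      rw [bexp]; simp only [hw, Pi.neg_apply]; linear_combination hQ'
    obtain ⟨g, hg, i, lam, hlam, heq⟩ :=
      key_ind (w 0 + w 1 + w 2).toNat w hwnn hwne hwQ (Int.self_le_toNat _)
    refine ⟨g, hg, i, -lam, neg_ne_zero.2 hlam, ?_⟩
    have hcoe : (fun k => ((w k : ℤ) : ℝ)) = -(fun k => ((v k : ℤ) : ℝ)) := by
      funext k; simp [hw]
    rw [hcoe, Matrix.mulVec_neg] at heq
    have hfin : (g : Matrix (Fin 3) (Fin 3) ℝ).mulVec (fun k => ((v k : ℤ) : ℝ)) =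
        -((lam : ℝ) • (![![0, 1, 1], ![1, 0, 1], ![1, 1, 0]] : Fin 3 → Fin 3 → ℝ) i) := by
      have := congrArg Neg.neg heq
      simpa using this
    rw [hfin]
    push_cast
    rw [neg_smul]
end
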